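/- Let f = g + conj(h) be a harmonic K-quasiconformal-type map on the unit disk with |h'| ≤ k|g'|, k = (K−1)/(K+1), f nonvanishing, and p ∈ (1,2]. Then Δ(|f|^p) ≤ ((1+K²)/2)(p(p−2)/K² + 2p) |Re f|^{p−2} |g' + h'|², provided |Re f| ≤ |f| is used with p−2 ≤ 0. -/

import Mathlib

open Complex

/-- Planar Laplacian of a real-valued function on `ℂ`. -/
noncomputable def lapR (u : ℂ → ℝ) (z : ℂ) : ℝ :=
  fderiv ℝ (fun w => fderiv ℝ u w 1) z 1
    + fderiv ℝ (fun w => fderiv ℝ u w Complex.I) z Complex.I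

open ContinuousLinearMap

noncomputable def mulrCLM (a : ℂ) : ℂ →L[ℝ] ℂ := (ContinuousLinearMap.mul ℝ ℂ).flip a
noncomputable def conjCLM : ℂ →L[ℝ] ℂ := Complex.conjCLE.toContinuousLinearMap
noncomputable def DF (a b : ℂ) : ℂ →L[ℝ] ℂ := mulrCLM a + conjCLM.comp (mulrCLM b)

@[simp] lemma mulrCLM_apply (a v : ℂ) : mulrCLM a v = v * a := rfl
@[simp] lemma conjCLM_apply (v : ℂ) : conjCLM v = (starRingEnd ℂ) v := rfl
@[simp] lemma DF_apply (a b v : ℂ) : DF a b v = v * a + (starRingEnd ℂ) (v * b) := rfl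

lemma hasFDerivAt_phi {g h : ℂ → ℂ} {w a b : ℂ}
    (hga : HasDerivAt g a w) (hhb : HasDerivAt h b w) :
    HasFDerivAt (fun w => g w + (starRingEnd ℂ) (h w)) (DF a b) w := by
  have h1 : HasFDerivAt g (mulrCLM a) w := by
    have := hga.hasFDerivAt.restrictScalars ℝ
    exact this.congr_fderiv (ContinuousLinearMap.ext fun v => by simp [mulrCLM, mul_comm])
  have h2 : HasFDerivAt (fun w => (starRingEnd ℂ) (h w)) (conjCLM.comp (mulrCLM b)) w := by
    have hb : HasFDerivAt h (mulrCLM b) w := by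
      have := hhb.hasFDerivAt.restrictScalars ℝ
      exact this.congr_fderiv (ContinuousLinearMap.ext fun v => by simp [mulrCLM, mul_comm])
    exact (conjCLM.hasFDerivAt).comp w hb
  exact h1.add h2

noncomputable def L1 (p : ℝ) (c a b : ℂ) : ℂ →L[ℝ] ℝ :=
  ((p/2) * (Complex.normSq c) ^ (p/2 - 1)) •
    (Complex.reCLM.comp (c • (conjCLM.comp (DF a b)) + ((starRingEnd ℂ) c) • (DF a b)))

lemma L1_apply (p : ℝ) (c a b v : ℂ) :
    L1 p c a b v
      = p * (Complex.normSq c) ^ (p/2 - 1) * ((starRingEnd ℂ) c * (v * a + (starRingEnd ℂ) (v * b))).re := by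
  simp [L1, Complex.mul_re, Complex.normSq_apply]
  ring

lemma hasFDerivAt_u (p : ℝ) (hp : 0 < p) {g h : ℂ → ℂ} {w a b : ℂ}
    (hga : HasDerivAt g a w) (hhb : HasDerivAt h b w)
    (hnz : g w + (starRingEnd ℂ) (h w) ≠ 0) :
    HasFDerivAt (fun w => ‖g w + (starRingEnd ℂ) (h w)‖ ^ p)
      (L1 p (g w + (starRingEnd ℂ) (h w)) a b) w := by
  set φ : ℂ → ℂ := fun w => g w + (starRingEnd ℂ) (h w) with hφdef
  have hφ : HasFDerivAt φ (DF a b) w := hasFDerivAt_phi hga hhb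
  have hconj : HasFDerivAt (fun w => (starRingEnd ℂ) (φ w)) (conjCLM.comp (DF a b)) w :=
    conjCLM.hasFDerivAt.comp w hφ
  have hmul : HasFDerivAt (fun w => φ w * (starRingEnd ℂ) (φ w))
      (φ w • (conjCLM.comp (DF a b)) + ((starRingEnd ℂ) (φ w)) • (DF a b)) w := hφ.mul hconj
  have hre : HasFDerivAt (fun w => (φ w * (starRingEnd ℂ) (φ w)).re)
      (Complex.reCLM.comp (φ w • (conjCLM.comp (DF a b)) + ((starRingEnd ℂ) (φ w)) • (DF a b))) w :=
    Complex.reCLM.hasFDerivAt.comp w hmul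
  have hXe : ∀ u : ℂ, (u * (starRingEnd ℂ) u).re = Complex.normSq u := by
    intro u; rw [Complex.mul_conj]; simp
  have hXne : (φ w * (starRingEnd ℂ) (φ w)).re ≠ 0 := by
    rw [hXe]; exact fun hc => hnz (Complex.normSq_eq_zero.mp hc)
  have hr := (Real.hasDerivAt_rpow_const (p := p/2) (Or.inl hXne)).comp_hasFDerivAt w hre
  have hfun : (fun w => ‖φ w‖ ^ p) = fun w => ((φ w * (starRingEnd ℂ) (φ w)).re) ^ (p/2) := by
    funext u
    rw [hXe, Complex.normSq_eq_norm_sq, ← Real.rpow_natCast ‖φ u‖ 2,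
      ← Real.rpow_mul (norm_nonneg _)]
    push_cast
    congr 1
    ring
  rw [hfun]
  have hL : L1 p (φ w) a b
      = (p / 2 * (φ w * (starRingEnd ℂ) (φ w)).re ^ (p / 2 - 1)) •
        (Complex.reCLM.comp (φ w • (conjCLM.comp (DF a b)) + ((starRingEnd ℂ) (φ w)) • (DF a b))) := by
    rw [L1, hXe]
  rw [hL]
  exact hr

noncomputable def L2 (r e : ℝ) (c ψz : ℂ) (Dφ Dψ : ℂ →L[ℝ] ℂ) : ℂ →L[ℝ] ℝ :=
  r • ((Complex.normSq c ^ e) •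
        (Complex.reCLM.comp (((starRingEnd ℂ) c) • Dψ + ψz • (conjCLM.comp Dφ)))
      + (((starRingEnd ℂ) c * ψz).re) •
        ((e * Complex.normSq c ^ (e - 1)) •
          (Complex.reCLM.comp (c • (conjCLM.comp Dφ) + ((starRingEnd ℂ) c) • Dφ))))

lemma hasFDerivAt_F (r e : ℝ) {φ ψ : ℂ → ℂ} {z : ℂ} {Dφ Dψ : ℂ →L[ℝ] ℂ}
    (hφ : HasFDerivAt φ Dφ z) (hψ : HasFDerivAt ψ Dψ z) (hnz : φ z ≠ 0) :
    HasFDerivAt (fun w => r * (Complex.normSq (φ w) ^ e * ((starRingEnd ℂ) (φ w) * ψ w).re))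
      (L2 r e (φ z) (ψ z) Dφ Dψ) z := by
  have hXe : ∀ u : ℂ, (u * (starRingEnd ℂ) u).re = Complex.normSq u := by
    intro u; rw [Complex.mul_conj]; simp
  have hconj : HasFDerivAt (fun w => (starRingEnd ℂ) (φ w)) (conjCLM.comp Dφ) z :=
    conjCLM.hasFDerivAt.comp z hφ
  -- derivative of N = normSq ∘ φ ^ e
  have hmul : HasFDerivAt (fun w => φ w * (starRingEnd ℂ) (φ w))
      (φ z • (conjCLM.comp Dφ) + ((starRingEnd ℂ) (φ z)) • Dφ) z := hφ.mul hconj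
  have hre : HasFDerivAt (fun w => (φ w * (starRingEnd ℂ) (φ w)).re)
      (Complex.reCLM.comp (φ z • (conjCLM.comp Dφ) + ((starRingEnd ℂ) (φ z)) • Dφ)) z :=
    Complex.reCLM.hasFDerivAt.comp z hmul
  have hXne : (φ z * (starRingEnd ℂ) (φ z)).re ≠ 0 := by
    rw [hXe]; exact fun hc => hnz (Complex.normSq_eq_zero.mp hc)
  have hN0 := (Real.hasDerivAt_rpow_const (p := e) (Or.inl hXne)).comp_hasFDerivAt z hre
  have hNfun : (fun w => ((φ w * (starRingEnd ℂ) (φ w)).re) ^ e)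
      = fun w => Complex.normSq (φ w) ^ e := by
    funext u; rw [hXe]
  have hN : HasFDerivAt (fun w => Complex.normSq (φ w) ^ e)
      ((e * Complex.normSq (φ z) ^ (e - 1)) •
        (Complex.reCLM.comp (φ z • (conjCLM.comp Dφ) + ((starRingEnd ℂ) (φ z)) • Dφ))) z := by
    rw [← hNfun]
    have : (e * Complex.normSq (φ z) ^ (e - 1))
        = (e * ((φ z * (starRingEnd ℂ) (φ z)).re) ^ (e - 1)) := by rw [hXe]
    rw [this]
    exact hN0
  -- derivative of A = re (conj φ * ψ)
  have hmulA : HasFDerivAt (fun w => (starRingEnd ℂ) (φ w) * ψ w)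
      (((starRingEnd ℂ) (φ z)) • Dψ + ψ z • (conjCLM.comp Dφ)) z := hconj.mul hψ
  have hA : HasFDerivAt (fun w => ((starRingEnd ℂ) (φ w) * ψ w).re)
      (Complex.reCLM.comp (((starRingEnd ℂ) (φ z)) • Dψ + ψ z • (conjCLM.comp Dφ))) z :=
    Complex.reCLM.hasFDerivAt.comp z hmulA
  have := (hN.mul hA).const_mul r
  exact this

lemma hasFDerivAt_psi2 {s t : ℂ → ℂ} {z : ℂ} {a b : ℂ}
    (hs : HasDerivAt s a z) (ht : HasDerivAt t b z) :
    HasFDerivAt (fun w => Complex.I * (s w - (starRingEnd ℂ) (t w)))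
      (Complex.I • DF a (-b)) z := by
  have h1 : HasFDerivAt (fun w => s w + (starRingEnd ℂ) (-(t w))) (DF a (-b)) z :=
    hasFDerivAt_phi (g := s) (h := fun w => -(t w)) hs ht.neg
  have h2 : HasFDerivAt (fun w => s w - (starRingEnd ℂ) (t w)) (DF a (-b)) z := by
    have : (fun w => s w + (starRingEnd ℂ) (-(t w))) = fun w => s w - (starRingEnd ℂ) (t w) := by
      funext u; simp; ring
    rwa [this] at h1
  exact h2.const_mul Complex.I

lemma lower_bound_aux {X R A B x y : ℝ} (hX : 0 ≤ X)
    (hid : A^2 + B^2 = X*(x^2+y^2) + 2*R) (hR : -(X*(x*y)) ≤ R) :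
    X*(x-y)^2 ≤ A^2 + B^2 := by nlinarith

lemma M_nonneg_aux {p x y : ℝ} (hp1 : 1 < p) (hp2 : p ≤ 2) (hx0 : 0 ≤ x) (hy0 : 0 ≤ y) :
    0 ≤ p*(p-2)*(x-y)^2 + 2*p*(x^2+y^2) := by
  nlinarith [sq_nonneg (p*(x-y)), mul_nonneg (mul_nonneg (by linarith : (0:ℝ) ≤ p) hx0) hy0]

lemma alg_ineq_aux {K p x y n : ℝ} (hK : 1 ≤ K) (hp1 : 1 < p) (hp2 : p ≤ 2)
    (hx0 : 0 ≤ x) (hy0 : 0 ≤ y) (hn0 : 0 ≤ n)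
    (hyk : (K+1)*y ≤ (K-1)*x) (hxn : x ≤ n + y) :
    p*(p-2)*(x-y)^2 + 2*p*(x^2+y^2) ≤ ((1+K^2)/2) * (p*(p-2)/K^2 + 2*p) * n^2 := by
  have hp0 : 0 < p := by linarith
  have hK0 : 0 < K := by linarith
  have hK21 : (0:ℝ) ≤ K^2 - 1 := by nlinarith
  have hyx : y ≤ x := by nlinarith
  have key4 : 4*(x*y) ≤ (K^2-1)*(x-y)^2 := by
    nlinarith [mul_nonneg (sub_nonneg.2 hyk) (show (0:ℝ) ≤ (K+1)*x - (K-1)*y by nlinarith)]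
  have hn2 : (x-y)^2 ≤ n^2 := by nlinarith
  have hq0 : (0:ℝ) ≤ 2*K^2*p^2 + 2*K^2*p*(K^2-1) := by
    nlinarith [mul_nonneg (mul_nonneg (sq_nonneg K) hp0.le) hK21, sq_nonneg (K*p)]
  rw [show ((1+K^2)/2) * (p*(p-2)/K^2 + 2*p)
      = ((1+K^2) * (p*(p-2) + 2*p*K^2))/(2*K^2) from by field_simp]
  rw [div_mul_eq_mul_div, le_div_iff₀ (by positivity)]
  have t1 : 2*K^2*p*(4*(x*y)) ≤ 2*K^2*p*((K^2-1)*(x-y)^2) :=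
    mul_le_mul_of_nonneg_left key4 (by positivity)
  have t2 : (2*K^2*p^2 + 2*K^2*p*(K^2-1))*(x-y)^2 ≤ (2*K^2*p^2 + 2*K^2*p*(K^2-1))*n^2 :=
    mul_le_mul_of_nonneg_left hn2 hq0
  have t3 : 0 ≤ (p*(2-p)*(K^2-1))*n^2 :=
    mul_nonneg (mul_nonneg (mul_nonneg hp0.le (by linarith : (0:ℝ) ≤ 2-p)) hK21) (sq_nonneg n)
  nlinarith [t1, t2, t3]


set_option maxHeartbeats 2000000 in
/-- For a `K`-quasiconformal-type harmonic `f = g + conj h` on the unit disk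
(with `|h'| ≤ k|g'|`, `k = (K−1)/(K+1)`), nonvanishing, and `p ∈ (1,2]`,
`Δ(|f|^p) ≤ ((1+K²)/2)(p(p−2)/K² + 2p) |Re f|^{p−2} |g' + h'|²`. -/
theorem laplacian_abs_pow_le (g h : ℂ → ℂ)
    (hg : DifferentiableOn ℂ g (Metric.ball 0 1))
    (hh : DifferentiableOn ℂ h (Metric.ball 0 1))
    (f : ℂ → ℂ) (hf : ∀ z ∈ Metric.ball (0 : ℂ) 1, f z = g z + (starRingEnd ℂ) (h z))
    (hnv : ∀ z ∈ Metric.ball (0 : ℂ) 1, f z ≠ 0)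
    (K k : ℝ) (hK : 1 ≤ K) (hk : k = (K - 1) / (K + 1))
    (hqr : ∀ z ∈ Metric.ball (0 : ℂ) 1,
      ‖deriv h z‖ ≤ k * ‖deriv g z‖)
    (p : ℝ) (hp1 : 1 < p) (hp2 : p ≤ 2)
    (z : ℂ) (hz : z ∈ Metric.ball (0 : ℂ) 1) (hre : (f z).re ≠ 0) :
    lapR (fun w => ‖f w‖ ^ p) z
      ≤ ((1 + K ^ 2) / 2) * (p * (p - 2) / K ^ 2 + 2 * p)
          * |(f z).re| ^ (p - 2) * ‖deriv g z + deriv h z‖ ^ 2 := by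
  have hDo : IsOpen (Metric.ball (0 : ℂ) 1) := Metric.isOpen_ball
  set D := Metric.ball (0 : ℂ) 1 with hD
  set G : ℂ → ℂ := deriv g with hG
  set H : ℂ → ℂ := deriv h with hH
  set φ : ℂ → ℂ := fun w => g w + (starRingEnd ℂ) (h w) with hφ
  -- analyticity
  have hga : AnalyticOnNhd ℂ g D := hg.analyticOnNhd hDo
  have hha : AnalyticOnNhd ℂ h D := hh.analyticOnNhd hDo
  have hgw : ∀ w ∈ D, HasDerivAt g (G w) w := fun w hw =>
    (hg.differentiableAt (hDo.mem_nhds hw)).hasDerivAt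
  have hhw : ∀ w ∈ D, HasDerivAt h (H w) w := fun w hw =>
    (hh.differentiableAt (hDo.mem_nhds hw)).hasDerivAt
  have hGz : HasDerivAt G (deriv G z) z := ((hga.deriv z hz).differentiableAt).hasDerivAt
  have hHz : HasDerivAt H (deriv H z) z := ((hha.deriv z hz).differentiableAt).hasDerivAt
  -- the open set U
  have hφc : ContinuousOn φ D := by
    apply hg.continuousOn.add
    exact continuous_star.comp_continuousOn hh.continuousOn
  set U : Set ℂ := D ∩ φ ⁻¹' {(0 : ℂ)}ᶜ with hU
  have hUo : IsOpen U := hφc.isOpen_inter_preimage hDo isOpen_compl_singleton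
  have hzU : z ∈ U := by
    refine ⟨hz, ?_⟩
    simp only [Set.mem_preimage, Set.mem_compl_iff, Set.mem_singleton_iff]
    rw [hφ]
    simp only
    rw [← hf z hz]
    exact hnv z hz
  have hφne : ∀ w ∈ U, φ w ≠ 0 := fun w hw => hw.2
  have hp0 : 0 < p := lt_trans one_pos hp1
  -- first derivative of u on U
  set u : ℂ → ℝ := fun w => ‖f w‖ ^ p with hu
  have hfd : ∀ w ∈ U, fderiv ℝ u w = L1 p (φ w) (G w) (H w) := by
    intro w hw
    have h1 : HasFDerivAt (fun w => ‖g w + (starRingEnd ℂ) (h w)‖ ^ p)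
        (L1 p (g w + (starRingEnd ℂ) (h w)) (G w) (H w)) w :=
      hasFDerivAt_u p hp0 (hgw w hw.1) (hhw w hw.1) (hφne w hw)
    have h2 : HasFDerivAt u (L1 p (φ w) (G w) (H w)) w := by
      refine HasFDerivAt.congr_of_eventuallyEq h1 ?_
      filter_upwards [hDo.mem_nhds hw.1] with x hx
      rw [hu]; simp only; rw [hf x hx]
    exact h2.fderiv
  -- the two first-derivative component functions
  set F₁ : ℂ → ℝ := fun w =>
    p * (Complex.normSq (φ w) ^ (p/2 - 1) * ((starRingEnd ℂ) (φ w) * (G w + (starRingEnd ℂ) (H w))).re)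
    with hF₁
  set F₂ : ℂ → ℝ := fun w =>
    p * (Complex.normSq (φ w) ^ (p/2 - 1) * ((starRingEnd ℂ) (φ w) * (Complex.I * (G w - (starRingEnd ℂ) (H w)))).re)
    with hF₂
  have hev1 : (fun w => fderiv ℝ u w 1) =ᶠ[nhds z] F₁ := by
    filter_upwards [hUo.mem_nhds hzU] with w hw
    rw [hfd w hw, L1_apply, hF₁]
    simp only [one_mul]
    ring
  have hev2 : (fun w => fderiv ℝ u w Complex.I) =ᶠ[nhds z] F₂ := by
    filter_upwards [hUo.mem_nhds hzU] with w hw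
    rw [hfd w hw, L1_apply, hF₂]
    have harg : Complex.I * (G w) + (starRingEnd ℂ) (Complex.I * (H w))
        = Complex.I * (G w - (starRingEnd ℂ) (H w)) := by
      simp [map_mul, Complex.conj_I]; ring
    simp only [← harg]
    ring
  have hlap : lapR u z = fderiv ℝ F₁ z 1 + fderiv ℝ F₂ z Complex.I := by
    rw [lapR, hev1.fderiv_eq, hev2.fderiv_eq]
  -- second derivatives
  have hnz : φ z ≠ 0 := hφne z hzU
  have hφz : HasFDerivAt φ (DF (G z) (H z)) z := hasFDerivAt_phi (hgw z hz) (hhw z hz)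
  have hψ₁ : HasFDerivAt (fun w => G w + (starRingEnd ℂ) (H w))
      (DF (deriv G z) (deriv H z)) z := hasFDerivAt_phi hGz hHz
  have hψ₂ : HasFDerivAt (fun w => Complex.I * (G w - (starRingEnd ℂ) (H w)))
      (Complex.I • DF (deriv G z) (-(deriv H z))) z := hasFDerivAt_psi2 hGz hHz
  have hd1 : HasFDerivAt F₁
      (L2 p (p/2 - 1) (φ z) (G z + (starRingEnd ℂ) (H z)) (DF (G z) (H z))
        (DF (deriv G z) (deriv H z))) z :=
    hasFDerivAt_F p (p/2 - 1) hφz hψ₁ hnz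
  have hd2 : HasFDerivAt F₂
      (L2 p (p/2 - 1) (φ z) (Complex.I * (G z - (starRingEnd ℂ) (H z))) (DF (G z) (H z))
        (Complex.I • DF (deriv G z) (-(deriv H z)))) z :=
    hasFDerivAt_F p (p/2 - 1) hφz hψ₂ hnz
  have hlapval : lapR u z
      = p * (p - 2) * (Complex.normSq (φ z)) ^ (p/2 - 2)
          * (((starRingEnd ℂ) (φ z) * (G z + (starRingEnd ℂ) (H z))).re ^ 2
            + ((starRingEnd ℂ) (φ z) * (Complex.I * (G z - (starRingEnd ℂ) (H z)))).re ^ 2)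
        + 2 * p * (Complex.normSq (φ z)) ^ (p/2 - 1)
          * (Complex.normSq (G z) + Complex.normSq (H z)) := by
    rw [hlap, hd1.fderiv, hd2.fderiv]
    simp only [L2, DF_apply, ContinuousLinearMap.smul_apply, ContinuousLinearMap.add_apply,
      ContinuousLinearMap.comp_apply, Complex.reCLM_apply, conjCLM_apply, smul_eq_mul,
      one_mul, map_add, map_mul, map_one, Complex.conj_conj, Complex.conj_I, map_neg,
      Complex.mul_re, Complex.mul_im, Complex.add_re, Complex.add_im, Complex.sub_re,
      Complex.sub_im, Complex.neg_re, Complex.neg_im, Complex.I_re, Complex.I_im,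
      Complex.conj_re, Complex.conj_im, Complex.one_re, Complex.one_im,
      Complex.normSq_apply]
    rw [show (p/2 - 1 - 1 : ℝ) = p/2 - 2 from by ring]
    ring
  -- abbreviations for the inequality part
  set x := ‖G z‖ with hx
  set y := ‖H z‖ with hy
  set n := ‖G z + H z‖ with hn
  set Fz := ‖φ z‖ with hFz
  set A₁ := ((starRingEnd ℂ) (φ z) * (G z + (starRingEnd ℂ) (H z))).re with hA₁
  set A₂ := ((starRingEnd ℂ) (φ z) * (Complex.I * (G z - (starRingEnd ℂ) (H z)))).re with hA₂
  have hF0 : 0 < Fz := norm_pos_iff.mpr hnz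
  have hx0 : 0 ≤ x := norm_nonneg _
  have hy0 : 0 ≤ y := norm_nonneg _
  have hn0 : 0 ≤ n := norm_nonneg _
  have hXr : ∀ e : ℝ, (Complex.normSq (φ z)) ^ e = Fz ^ (2*e) := by
    intro e
    rw [← Complex.sq_norm, ← Real.rpow_natCast Fz 2, ← Real.rpow_mul hF0.le]
    norm_num
  -- lower bound for A₁² + A₂²
  have hid : A₁^2 + A₂^2
      = Complex.normSq (φ z) * (Complex.normSq (G z) + Complex.normSq (H z))
        + 2 * ((starRingEnd ℂ) (φ z) * (starRingEnd ℂ) (φ z) * (G z * (starRingEnd ℂ) (H z))).re := by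
    rw [hA₁, hA₂]
    simp only [Complex.mul_re, Complex.mul_im, Complex.add_re, Complex.add_im,
      Complex.sub_re, Complex.sub_im, Complex.I_re, Complex.I_im, Complex.conj_re,
      Complex.conj_im, Complex.normSq_apply]
    ring
  have hRabs : |((starRingEnd ℂ) (φ z) * (starRingEnd ℂ) (φ z) * (G z * (starRingEnd ℂ) (H z))).re|
      ≤ Complex.normSq (φ z) * (x*y) := by
    refine le_trans (Complex.abs_re_le_norm _) ?_
    rw [norm_mul, norm_mul, norm_mul, Complex.norm_conj, Complex.norm_conj, ← Complex.sq_norm]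
    exact le_of_eq (by rw [hx, hy]; ring)
  have hgx : Complex.normSq (G z) = x^2 := (Complex.sq_norm _).symm
  have hhy : Complex.normSq (H z) = y^2 := (Complex.sq_norm _).symm
  have hA : Complex.normSq (φ z) * (x-y)^2 ≤ A₁^2 + A₂^2 :=
    lower_bound_aux (Complex.normSq_nonneg (φ z)) (by rw [hid, hgx, hhy])
      ((abs_le.mp hRabs).1)
  -- main pointwise bound
  have hcoef : p*(p-2) ≤ 0 :=
    mul_nonpos_iff.mpr (Or.inl ⟨hp0.le, by linarith only [hp2]⟩)
  have h4 : 0 ≤ Fz^(p-4) := Real.rpow_nonneg hF0.le _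
  have key : p*(p-2)*(Fz^(p-4)*(A₁^2+A₂^2))
      ≤ p*(p-2)*(Fz^(p-4)*(Complex.normSq (φ z)*(x-y)^2)) :=
    mul_le_mul_of_nonpos_left (mul_le_mul_of_nonneg_left hA h4) hcoef
  have e3 : Fz^(p-4) * Complex.normSq (φ z) = Fz^(p-2) := by
    rw [← Complex.sq_norm, ← Real.rpow_natCast Fz 2, ← Real.rpow_add hF0]
    congr 1
    ring
  have e4 : p*(p-2)*(Fz^(p-4)*(Complex.normSq (φ z)*(x-y)^2))
      = Fz^(p-2)*(p*(p-2)*(x-y)^2) := by rw [← e3]; ring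
  have hstep : lapR u z ≤ Fz ^ (p-2) * (p*(p-2)*(x-y)^2 + 2*p*(x^2+y^2)) := by
    rw [hlapval, hgx, hhy, hXr, hXr,
      show 2*(p/2-2) = p-4 from by ring, show 2*(p/2-1) = p-2 from by ring]
    linarith only [key, e4]
  have hM0 : 0 ≤ p*(p-2)*(x-y)^2 + 2*p*(x^2+y^2) := M_nonneg_aux hp1 hp2 hx0 hy0
  have hfφ : f z = φ z := hf z hz
  have hreabs : |(f z).re| ≤ Fz := by
    rw [hfφ]; exact Complex.abs_re_le_norm _
  have hre0 : 0 < |(f z).re| := abs_pos.mpr hre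
  have hrpow : Fz ^ (p-2) ≤ |(f z).re| ^ (p-2) :=
    Real.rpow_le_rpow_of_nonpos hre0 hreabs (by linarith)
  have hstep2 : lapR u z ≤ |(f z).re| ^ (p-2) * (p*(p-2)*(x-y)^2 + 2*p*(x^2+y^2)) :=
    le_trans hstep (mul_le_mul_of_nonneg_right hrpow hM0)
  have hK1 : 0 < K + 1 := by linarith only [hK]
  have hyk : (K+1)*y ≤ (K-1)*x := by
    have h5 := hqr z hz
    rw [hk, div_mul_eq_mul_div, le_div_iff₀ hK1, ← hx, ← hy] at h5
    linarith only [h5]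
  have hxn : x ≤ n + y := by
    have h6 := norm_add_le (G z + H z) (-(H z))
    simp only [add_neg_cancel_right, norm_neg] at h6
    rw [← hx, ← hy, ← hn] at h6
    linarith only [h6]
  have hCkey : p*(p-2)*(x-y)^2 + 2*p*(x^2+y^2)
      ≤ ((1+K^2)/2) * (p*(p-2)/K^2 + 2*p) * n^2 :=
    alg_ineq_aux hK hp1 hp2 hx0 hy0 hn0 hyk hxn
  calc lapR u z ≤ |(f z).re|^(p-2) * (p*(p-2)*(x-y)^2+2*p*(x^2+y^2)) := hstep2
    _ ≤ |(f z).re|^(p-2) * (((1+K^2)/2) * (p*(p-2)/K^2 + 2*p) * n^2) :=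
        mul_le_mul_of_nonneg_left hCkey (Real.rpow_nonneg (abs_nonneg _) _)
    _ = ((1+K^2)/2) * (p*(p-2)/K^2+2*p) * |(f z).re|^(p-2) * n^2 := by ring
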